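/- If G is a finite cubic (3-regular) simple graph and sigma is a minimal signature of G (i.e., |E^-(sigma)| = l(G,sigma)), then the set of negative edges E^-(sigma) is a matching: no two negative edges share a vertex. -/

import Mathlib

open SimpleGraph Finset


/-- A signed graph is balanced if every cycle has sign `+1`. -/
def IsBalanced {V : Type*} (G : SimpleGraph V) (σ : Sym2 V → ℤˣ) : Prop :=
  ∀ (v : V) (w : G.Walk v v), w.IsCycle → (w.edges.map σ).prod = 1

/-- The set of negative edges of a signed graph. -/
def negEdges {V : Type*} (G : SimpleGraph V) (σ : Sym2 V → ℤˣ) : Set (Sym2 V) :=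
  {e | e ∈ G.edgeSet ∧ σ e = -1}

/-- The frustration index: the least number of edges whose deletion leaves a balanced
signed graph. -/
noncomputable def frustIndex {V : Type*} (G : SimpleGraph V) (σ : Sym2 V → ℤˣ) : ℕ :=
  sInf {n | ∃ S : Finset (Sym2 V), ↑S ⊆ G.edgeSet ∧ S.card = n ∧
    IsBalanced (G.deleteEdges ↑S) σ}

/-- The switched signature `σ^ζ`, with `σ^ζ(uv) = ζ(u) * σ(uv) * ζ(v)`. -/
def switch {V : Type*} (σ : Sym2 V → ℤˣ) (ζ : V → ℤˣ) : Sym2 V → ℤˣ := fun e =>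
  Sym2.lift ⟨fun u v => ζ u * ζ v, fun u v => mul_comm (ζ u) (ζ v)⟩ e * σ e

/-- The "coboundary" factor of a switching function. -/
def chiAux {V : Type*} (ζ : V → ℤˣ) : Sym2 V → ℤˣ :=
  Sym2.lift ⟨fun u v => ζ u * ζ v, fun u v => mul_comm (ζ u) (ζ v)⟩

lemma switch_eq_chi_mul {V : Type*} (σ : Sym2 V → ℤˣ) (ζ : V → ℤˣ) (e : Sym2 V) :
    switch σ ζ e = chiAux ζ e * σ e := rfl

lemma walk_chi_prod {V : Type*} {H : SimpleGraph V} (ζ : V → ℤˣ) {a b : V}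
    (w : H.Walk a b) : (w.edges.map (chiAux ζ)).prod = ζ a * ζ b := by
  induction w with
  | nil => simp [Int.units_mul_self]
  | @cons u x y hadj p ih =>
    simp only [SimpleGraph.Walk.edges_cons, List.map_cons, List.prod_cons, ih]
    show ζ u * ζ x * (ζ x * ζ y) = ζ u * ζ y
    rw [mul_assoc, ← mul_assoc (ζ x), Int.units_mul_self, one_mul]

lemma isBalanced_switch_iff {V : Type*} (H : SimpleGraph V) (σ : Sym2 V → ℤˣ)
    (ζ : V → ℤˣ) : IsBalanced H (switch σ ζ) ↔ IsBalanced H σ := by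
  have key : ∀ (v : V) (w : H.Walk v v),
      (w.edges.map (switch σ ζ)).prod = (w.edges.map σ).prod := by
    intro v w
    have : (w.edges.map (switch σ ζ)).prod
        = (w.edges.map (chiAux ζ)).prod * (w.edges.map σ).prod := by
      rw [← List.prod_map_mul]; rfl
    rw [this, walk_chi_prod, Int.units_mul_self, one_mul]
  constructor <;> intro h v w hw
  · rw [← key v w]; exact h v w hw
  · rw [key v w]; exact h v w hw

lemma frustIndex_switch {V : Type*} (G : SimpleGraph V) (σ : Sym2 V → ℤˣ)
    (ζ : V → ℤˣ) : frustIndex G (switch σ ζ) = frustIndex G σ := by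
  unfold frustIndex
  congr 1
  ext n
  simp only [Set.mem_setOf_eq]
  constructor <;> rintro ⟨S, hS, hcard, hbal⟩ <;>
    exact ⟨S, hS, hcard, by rwa [isBalanced_switch_iff] at *⟩

lemma frustIndex_le_ncard_negEdges {V : Type*} [Fintype V] (G : SimpleGraph V)
    (σ : Sym2 V → ℤˣ) : frustIndex G σ ≤ (negEdges G σ).ncard := by
  classical
  have hfin : (negEdges G σ).Finite := Set.toFinite _
  apply Nat.sInf_le
  refine ⟨hfin.toFinset, ?_, ?_, ?_⟩
  · rw [Set.Finite.coe_toFinset]; exact fun e he => he.1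
  · exact (Set.ncard_eq_toFinset_card _ hfin).symm
  · intro v w hw
    apply List.prod_eq_one
    intro x hx
    rw [List.mem_map] at hx
    obtain ⟨e, he, rfl⟩ := hx
    have hmem : e ∈ (G.deleteEdges ↑hfin.toFinset).edgeSet := w.edges_subset_edgeSet he
    rw [SimpleGraph.edgeSet_deleteEdges] at hmem
    rcases Int.units_eq_one_or (σ e) with h1 | h1
    · exact h1
    · exact absurd (by rw [Set.Finite.coe_toFinset]; exact ⟨hmem.1, h1⟩) hmem.2

/-- In a minimal signature of a finite cubic graph, the negative edges form a matching. -/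
theorem cubic_minimal_negEdges_matching {V : Type*} [Fintype V] (G : SimpleGraph V)
    [DecidableRel G.Adj] (hcubic : ∀ v : V, G.degree v = 3) (σ : Sym2 V → ℤˣ)
    (hmin : (negEdges G σ).ncard = frustIndex G σ) :
    ∀ e ∈ negEdges G σ, ∀ f ∈ negEdges G σ, e ≠ f → ∀ v : V, v ∈ e → v ∉ f := by
  classical
  intro e he f hf hef v hve hvf
  -- switching function at v
  set ζ : V → ℤˣ := fun u => if u = v then -1 else 1 with hζ
  set A : Set (Sym2 V) := negEdges G σ with hA
  set I : Set (Sym2 V) := G.incidenceSet v with hI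
  -- the sign of switched edges
  have hchi : ∀ g ∈ G.edgeSet, chiAux ζ g = if v ∈ g then -1 else 1 := by
    intro g hg
    induction g with
    | _ u w =>
      have huw : u ≠ w := (G.mem_edgeSet.mp hg).ne
      show ζ u * ζ w = _
      by_cases hu : u = v <;> by_cases hw : w = v
      · exact absurd (hu.trans hw.symm) huw
      · rw [if_pos (Sym2.mem_iff.mpr (Or.inl hu.symm))]
        simp only [hζ]; simp [hu, hw]
      · rw [if_pos (Sym2.mem_iff.mpr (Or.inr hw.symm))]
        simp only [hζ]; simp [hu, hw]
      · rw [if_neg (by rw [Sym2.mem_iff]; push_neg; exact ⟨Ne.symm hu, Ne.symm hw⟩)]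
        simp only [hζ]; simp [hu, hw]
  -- description of the switched negative edge set
  have hB : negEdges G (switch σ ζ) = (A \ I) ∪ (I \ A) := by
    ext g
    simp only [negEdges, Set.mem_setOf_eq, Set.mem_union, Set.mem_diff, hA, hI,
      SimpleGraph.incidenceSet, Set.mem_sep_iff]
    constructor
    · rintro ⟨hg, hneg⟩
      rw [switch_eq_chi_mul, hchi g hg] at hneg
      by_cases hv : v ∈ g
      · rw [if_pos hv] at hneg
        have hσ : σ g = 1 := by
          rcases Int.units_eq_one_or (σ g) with h1 | h1
          · exact h1
          · rw [h1] at hneg; exact absurd hneg (by decide)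
        exact Or.inr ⟨⟨hg, hv⟩, fun hc => by
          rw [hσ] at hc; exact absurd hc.2 (by decide)⟩
      · rw [if_neg hv, one_mul] at hneg
        exact Or.inl ⟨⟨hg, hneg⟩, fun hc => hv hc.2⟩
    · rintro (⟨⟨hg2, hneg⟩, hnI⟩ | ⟨⟨hg2, hv2⟩, hnA⟩)
      · have hv' : v ∉ g := fun hc => hnI ⟨hg2, hc⟩
        refine ⟨hg2, ?_⟩
        rw [switch_eq_chi_mul, hchi g hg2, if_neg hv', one_mul]; exact hneg
      · have hpos : σ g = 1 := by
          rcases Int.units_eq_one_or (σ g) with h1 | h1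
          · exact h1
          · exact absurd ⟨hg2, h1⟩ hnA
        refine ⟨hg2, ?_⟩
        rw [switch_eq_chi_mul, hchi g hg2, if_pos hv2, hpos, mul_one]
  -- cardinalities
  have hIfin : I.Finite := Set.toFinite _
  have hAfin : A.Finite := Set.toFinite _
  have hIcard : I.ncard = 3 := by
    rw [hI, Set.ncard_eq_toFinset_card']
    have : (G.incidenceSet v).toFinset = G.incidenceFinset v := by
      simp [SimpleGraph.incidenceFinset]
    rw [this, SimpleGraph.card_incidenceFinset_eq_degree, hcubic]
  have hefI : ({e, f} : Set (Sym2 V)) ⊆ A ∩ I := by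
    rintro g (rfl | rfl)
    · exact ⟨he, he.1, hve⟩
    · exact ⟨hf, hf.1, hvf⟩
  have hAI2 : 2 ≤ (A ∩ I).ncard := by
    rw [← Set.ncard_pair hef]
    exact Set.ncard_le_ncard hefI (hAfin.inter_of_left _)
  have hIdiff : (I \ A).ncard ≤ 1 := by
    have hsub : I \ A ⊆ I \ {e, f} := by
      intro g hg
      exact ⟨hg.1, fun hc => hg.2 (hefI hc).1⟩
    calc (I \ A).ncard ≤ (I \ {e, f}).ncard :=
          Set.ncard_le_ncard hsub hIfin.diff
      _ = I.ncard - ({e, f} : Set (Sym2 V)).ncard :=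
          Set.ncard_diff (fun g hg => (hefI hg).2) (Set.toFinite _)
      _ = 1 := by rw [hIcard, Set.ncard_pair hef]
  have hsplit : A.ncard = (A \ I).ncard + (A ∩ I).ncard := by
    rw [← Set.ncard_union_eq (Set.disjoint_of_subset_right Set.inter_subset_right
        Set.disjoint_sdiff_left) hAfin.diff (hAfin.inter_of_left _),
      Set.diff_union_inter]
  have hBcard : (negEdges G (switch σ ζ)).ncard = (A \ I).ncard + (I \ A).ncard := by
    rw [hB, Set.ncard_union_eq disjoint_sdiff_sdiff hAfin.diff hIfin.diff]
  have hlt : (negEdges G (switch σ ζ)).ncard < A.ncard := by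
    rw [hBcard, hsplit]
    omega
  have := frustIndex_le_ncard_negEdges G (switch σ ζ)
  rw [frustIndex_switch] at this
  omega
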